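/- Fix a natural number d ≥ 1 and consider the function Card_d : ℝ^d → ℕ defined by Card_d(x_1,…,x_d) = the cardinality of the set {x_1,…,x_d}. Then Card_d is d-continuous (indeed it is constant on each of the d sets {x ∈ ℝ^d : Card_d(x) = k}, k = 1,…,d), but Card_d is not (d−1)-continuous. Hence the minimal number of pieces into which ℝ^d can be partitioned so that Card_d is continuous on each piece equals d. -/

import Mathlib

/-- Perturbation: if `x` has fewer than `d` distinct coordinates, an arbitrarily small
perturbation has one more distinct coordinate. -/
lemma card_pert {d : ℕ} (x : Fin d → ℝ) (hlt : (Finset.univ.image x).card < d)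
    {ε : ℝ} (hε : 0 < ε) :
    ∃ y : Fin d → ℝ, dist y x < ε ∧
      (Finset.univ.image y).card = (Finset.univ.image x).card + 1 := by
  have hc : (Finset.univ.image x).card < (Finset.univ : Finset (Fin d)).card := by
    simpa using hlt
  obtain ⟨i, -, j, -, hij, hxij⟩ :=
    Finset.exists_ne_map_eq_of_card_lt_of_maps_to hc
      (fun a _ => Finset.mem_image_of_mem x (Finset.mem_univ a))
  -- choose δ ∈ (0, ε) with x i + δ ∉ image x
  have hinf : (Set.Ioo (0:ℝ) ε).Infinite := Set.Ioo_infinite hε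
  obtain ⟨δ, hδmem, hδnot⟩ := hinf.exists_notMem_finset
    ((Finset.univ.image x).image (fun v => v - x i))
  obtain ⟨hδ0, hδε⟩ := hδmem
  have hnew : x i + δ ∉ Finset.univ.image x := by
    intro hmem
    exact hδnot (by
      refine Finset.mem_image.mpr ⟨x i + δ, hmem, ?_⟩
      ring)
  refine ⟨Function.update x i (x i + δ), ?_, ?_⟩
  · rw [dist_pi_lt_iff hε]
    intro b
    by_cases hb : b = i
    · subst hb
      simp [Function.update_self, Real.dist_eq, abs_of_pos hδ0, hδε]
    · simp [Function.update_of_ne hb, hε]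
  · have himg : Finset.univ.image (Function.update x i (x i + δ))
        = insert (x i + δ) (Finset.univ.image x) := by
      ext a
      simp only [Finset.mem_image, Finset.mem_insert, Finset.mem_univ, true_and]
      constructor
      · rintro ⟨b, rfl⟩
        by_cases hb : b = i
        · subst hb; left; rw [Function.update_self]
        · right; exact ⟨b, (Function.update_of_ne hb _ _).symm⟩
      · rintro (rfl | ⟨b, rfl⟩)
        · exact ⟨i, Function.update_self _ _ _⟩
        · by_cases hb : b = i
          · subst hb
            exact ⟨j, by rw [Function.update_of_ne (Ne.symm hij), hxij]⟩
          · exact ⟨b, Function.update_of_ne hb _ _⟩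
    rw [himg, Finset.card_insert_of_notMem hnew]

/-- Any cover by `m` pieces on each of which the card function is continuous needs `m ≥ d`. -/
lemma card_chain {d m : ℕ} (hd : 1 ≤ d) (D : Fin m → Set (Fin d → ℝ))
    (hcov : (⋃ i, D i) = Set.univ)
    (hcont : ∀ i, ContinuousOn (fun x : Fin d → ℝ => (Finset.univ.image x).card) (D i)) :
    d ≤ m := by
  set f : (Fin d → ℝ) → ℕ := fun x => (Finset.univ.image x).card with hf
  have hNE : Nonempty (Fin d) := ⟨⟨0, hd⟩⟩
  have hcover : ∀ x : Fin d → ℝ, ∃ i, x ∈ D i := by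
    intro x
    have : x ∈ ⋃ i, D i := by rw [hcov]; trivial
    exact Set.mem_iUnion.mp this
  have hloc : ∀ i, ∀ x ∈ D i, ∃ ε > 0, ∀ y ∈ D i, dist y x < ε → f y = f x := by
    intro i x hx
    have h : ContinuousWithinAt f (D i) x := hcont i x hx
    have hmem : {y | f y = f x} ∈ nhdsWithin x (D i) := by
      have : ({f x} : Set ℕ) ∈ nhds (f x) :=
        (isOpen_discrete {f x}).mem_nhds rfl
      exact h this
    rw [Metric.mem_nhdsWithin_iff] at hmem
    obtain ⟨ε, hε, hsub⟩ := hmem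
    exact ⟨ε, hε, fun y hy hdy => hsub ⟨Metric.mem_ball.mpr hdy, hy⟩⟩
  have main : ∀ k : ℕ, k + 1 ≤ d → ∃ (x : Fin d → ℝ) (ε : ℝ) (S : Finset (Fin m)),
      0 < ε ∧ f x = k + 1 ∧ S.card = k + 1 ∧
      ∀ i ∈ S, ∀ y ∈ D i, dist y x < ε → f y ≤ k + 1 := by
    intro k
    induction k with
    | zero =>
      intro _
      set x0 : Fin d → ℝ := fun _ => 0 with hx0
      have hfx0 : f x0 = 1 := by
        simp [hf, hx0, Finset.image_const (Finset.univ_nonempty) (0:ℝ)]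
      obtain ⟨i, hi⟩ := hcover x0
      obtain ⟨ε, hε, hεloc⟩ := hloc i x0 hi
      refine ⟨x0, ε, {i}, hε, hfx0, Finset.card_singleton i, ?_⟩
      intro i' hi' y hy hdy
      rw [Finset.mem_singleton] at hi'
      subst hi'
      rw [hεloc y hy hdy, hfx0]
    | succ k ih =>
      intro hk
      obtain ⟨x, ε, S, hε, hfx, hS, hinv⟩ := ih (by omega)
      have hlt : f x < d := by omega
      obtain ⟨x', hdist, hfx'⟩ := card_pert x hlt hε
      have hfx'' : f x' = k + 1 + 1 := by rw [show f x' = f x + 1 from hfx', hfx]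
      obtain ⟨i', hi'⟩ := hcover x'
      have hi'S : i' ∉ S := by
        intro hmem
        have h1 := hinv i' hmem x' hi' hdist
        have h2 : f x' = f x + 1 := hfx'
        omega
      obtain ⟨ε'', hε'', hεloc⟩ := hloc i' x' hi'
      refine ⟨x', min ε'' (ε - dist x' x), insert i' S,
        lt_min hε'' (by linarith), hfx'', ?_, ?_⟩
      · rw [Finset.card_insert_of_notMem hi'S, hS]
      · intro i hi y hy hdy
        rcases Finset.mem_insert.mp hi with rfl | hiS
        · rw [hεloc y hy (lt_of_lt_of_le hdy (min_le_left _ _)), hfx'']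
        · have hdyx : dist y x < ε := by
            calc dist y x ≤ dist y x' + dist x' x := dist_triangle _ _ _
              _ < (ε - dist x' x) + dist x' x :=
                  add_lt_add_of_lt_of_le (lt_of_lt_of_le hdy (min_le_right _ _)) le_rfl
              _ = ε := by ring
          have := hinv i hiS y hy hdyx
          omega
  obtain ⟨x, ε, S, hε, hfx, hS, hinv⟩ := main (d - 1) (by omega)
  have : S.card ≤ m := le_trans (Finset.card_le_univ S) (by simp)
  omega

/-- The map `Card_d : ℝ^d → ℕ`, `(x_1,…,x_d) ↦ Card {x_1,…,x_d}`, is `d`-continuous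
(indeed constant on each level set `{x : Card_d x = k}`, `k = 1,…,d`) but not
`(d-1)`-continuous; the least number of pieces making it piecewise continuous is `d`. -/
theorem card_function_exactly_d_continuous (d : ℕ) (hd : 1 ≤ d) :
    (∀ k : ℕ, ∀ x y : Fin d → ℝ,
        x ∈ {z : Fin d → ℝ | (Finset.univ.image z).card = k} →
        y ∈ {z : Fin d → ℝ | (Finset.univ.image z).card = k} →
        (Finset.univ.image x).card = (Finset.univ.image y).card) ∧
    (∃ D : Fin d → Set (Fin d → ℝ), (⋃ i, D i) = Set.univ ∧
      ∀ i, ContinuousOn (fun x : Fin d → ℝ => (Finset.univ.image x).card) (D i)) ∧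
    (¬ ∃ D : Fin (d - 1) → Set (Fin d → ℝ), (⋃ i, D i) = Set.univ ∧
      ∀ i, ContinuousOn (fun x : Fin d → ℝ => (Finset.univ.image x).card) (D i)) ∧
    IsLeast {k : ℕ | ∃ D : Fin k → Set (Fin d → ℝ), (⋃ i, D i) = Set.univ ∧
      ∀ i, ContinuousOn (fun x : Fin d → ℝ => (Finset.univ.image x).card) (D i)} d := by
  have hNE : Nonempty (Fin d) := ⟨⟨0, hd⟩⟩
  have hbound : ∀ x : Fin d → ℝ, 1 ≤ (Finset.univ.image x).card ∧
      (Finset.univ.image x).card ≤ d := by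
    intro x
    constructor
    · exact Finset.card_pos.mpr (Finset.univ_nonempty.image x)
    · exact le_trans Finset.card_image_le (by simp)
  have witness : ∃ D : Fin d → Set (Fin d → ℝ), (⋃ i, D i) = Set.univ ∧
      ∀ i, ContinuousOn (fun x : Fin d → ℝ => (Finset.univ.image x).card) (D i) := by
    refine ⟨fun i => {z | (Finset.univ.image z).card = (i : ℕ) + 1}, ?_, ?_⟩
    · ext z
      simp only [Set.mem_iUnion, Set.mem_univ, iff_true, Set.mem_setOf_eq]
      obtain ⟨h1, h2⟩ := hbound z
      exact ⟨⟨(Finset.univ.image z).card - 1, by omega⟩, by simp only [Set.mem_setOf_eq, Fin.val_mk]; omega⟩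
    · intro i
      exact continuousOn_const.congr (fun z hz => hz)
  refine ⟨fun k x y hx hy => by rw [hx, hy], witness, ?_, witness, ?_⟩
  · rintro ⟨D, hcov, hcont⟩
    have := card_chain hd D hcov hcont
    omega
  · intro k hk
    obtain ⟨D, hcov, hcont⟩ := hk
    exact card_chain hd D hcov hcont
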